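/- arXiv:2112.10147 — 2 statements merged into one kernel-verified Lean document; each statement's English description precedes it below -/
import Mathlib

section
/- Let α ∈ [−1,1] and let (U₁,...,U_d,V) be a random vector on [0,1]^{d+1} whose law has Lebesgue density a(u,v) = 1 + α(1−2v)·∏_{i=1}^d (1−2u_i) (the EFGM copula A_α with parameter α). Let V' be a random variable such that V and V' share the same conditional distribution given U = (U₁,...,U_d) and are conditionally independent given U. Then the joint distribution function of (V,V') is the bivariate EFGM copula with parameter α²/3^d, i.e., P(V ≤ s, V' ≤ t) = st + (α²/3^d)·s(1−s)·t(1−t) for all (s,t) ∈ [0,1]². -/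
open MeasureTheory ProbabilityTheory Set
open scoped NNReal ENNReal

noncomputable section EfgmAux

namespace EfgmAux

/-- The unit cube in `ℝ^d`. -/
def cubeS (d : ℕ) : Set (Fin d → ℝ) := Set.univ.pi fun _ => Set.Icc (0:ℝ) 1

/-- The unit box in `ℝ^d × ℝ`. -/
def boxS (d : ℕ) : Set ((Fin d → ℝ) × ℝ) := cubeS d ×ˢ Set.Icc (0:ℝ) 1

/-- The EFGM density. -/
def rho (d : ℕ) (α : ℝ) : (Fin d → ℝ) × ℝ → ℝ :=
  (boxS d).indicator (fun q => 1 + α * (1 - 2 * q.2) * ∏ i, (1 - 2 * q.1 i))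

/-- The conditional CDF function. -/
def Gf (d : ℕ) (α r : ℝ) : (Fin d → ℝ) → ℝ :=
  (cubeS d).indicator (fun u => r + α * (r * (1 - r)) * ∏ i, (1 - 2 * u i))

lemma mem_cubeS {d : ℕ} {u : Fin d → ℝ} : u ∈ cubeS d ↔ ∀ i, u i ∈ Set.Icc (0:ℝ) 1 := by
  constructor
  · intro h i
    exact h i (Set.mem_univ i)
  · intro h i _
    exact h i

lemma measurableSet_cubeS (d : ℕ) : MeasurableSet (cubeS d) :=
  MeasurableSet.univ_pi fun _ => measurableSet_Icc

lemma measurableSet_boxS (d : ℕ) : MeasurableSet (boxS d) :=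
  (measurableSet_cubeS d).prod measurableSet_Icc

lemma measurable_prodTerm (d : ℕ) : Measurable fun u : Fin d → ℝ => ∏ i, (1 - 2 * u i) :=
  Finset.measurable_prod _ fun i _ =>
    measurable_const.sub ((measurable_pi_apply i).const_mul 2)

lemma abs_prodTerm_le_one {d : ℕ} {u : Fin d → ℝ} (h : u ∈ cubeS d) :
    |∏ i, (1 - 2 * u i)| ≤ 1 := by
  rw [Finset.abs_prod]
  refine Finset.prod_le_one (fun i _ => abs_nonneg _) (fun i _ => ?_)
  have h1 := (mem_cubeS.1 h i).1
  have h2 := (mem_cubeS.1 h i).2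
  rw [abs_le]
  constructor <;> linarith

lemma measurable_rho (d : ℕ) (α : ℝ) : Measurable (rho d α) := by
  refine Measurable.indicator ?_ (measurableSet_boxS d)
  exact measurable_const.add
    (((measurable_const.sub (measurable_snd.const_mul 2)).const_mul α).mul
      ((measurable_prodTerm d).comp measurable_fst))

lemma abs_inner_le_one {d : ℕ} {α : ℝ} (hα : |α| ≤ 1) {p : (Fin d → ℝ) × ℝ}
    (hp : p ∈ boxS d) : |α * (1 - 2 * p.2) * ∏ i, (1 - 2 * p.1 i)| ≤ 1 := by
  obtain ⟨hp1, hp2⟩ := hp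
  have hPi : |∏ i, (1 - 2 * p.1 i)| ≤ 1 := abs_prodTerm_le_one hp1
  have hv : |1 - 2 * p.2| ≤ 1 := by
    rw [abs_le]
    constructor
    · linarith [hp2.2]
    · linarith [hp2.1]
  have h1 : |α| * |1 - 2 * p.2| ≤ 1 * 1 := mul_le_mul hα hv (abs_nonneg _) (by norm_num)
  have h2 : |α| * |1 - 2 * p.2| * |∏ i, (1 - 2 * p.1 i)| ≤ 1 * 1 * 1 :=
    mul_le_mul h1 hPi (abs_nonneg _) (by norm_num)
  calc |α * (1 - 2 * p.2) * ∏ i, (1 - 2 * p.1 i)|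
      = |α| * |1 - 2 * p.2| * |∏ i, (1 - 2 * p.1 i)| := by rw [abs_mul, abs_mul]
    _ ≤ 1 * 1 * 1 := h2
    _ = 1 := by norm_num

lemma rho_nonneg {d : ℕ} {α : ℝ} (hα : |α| ≤ 1) (p : (Fin d → ℝ) × ℝ) : 0 ≤ rho d α p := by
  rw [rho]
  by_cases hp : p ∈ boxS d
  · rw [Set.indicator_of_mem hp]
    have h1 := abs_inner_le_one hα hp
    have h2 := neg_abs_le (α * (1 - 2 * p.2) * ∏ i, (1 - 2 * p.1 i))
    linarith
  · rw [Set.indicator_of_notMem hp]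

lemma rho_le_two {d : ℕ} {α : ℝ} (hα : |α| ≤ 1) (p : (Fin d → ℝ) × ℝ) : rho d α p ≤ 2 := by
  rw [rho]
  by_cases hp : p ∈ boxS d
  · rw [Set.indicator_of_mem hp]
    have h1 := abs_inner_le_one hα hp
    have h2 := le_abs_self (α * (1 - 2 * p.2) * ∏ i, (1 - 2 * p.1 i))
    linarith
  · rw [Set.indicator_of_notMem hp]
    norm_num

lemma rho_split {d : ℕ} (α : ℝ) (u : Fin d → ℝ) (v : ℝ) :
    rho d α (u, v) = (cubeS d).indicator (fun _ => (1:ℝ)) u *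
      (Set.Icc (0:ℝ) 1).indicator (fun w => 1 + (α * ∏ i, (1 - 2 * u i)) * (1 - 2 * w)) v := by
  rw [rho]
  by_cases hu : u ∈ cubeS d <;> by_cases hv : v ∈ Set.Icc (0:ℝ) 1
  · rw [Set.indicator_of_mem (show (u, v) ∈ boxS d from Set.mk_mem_prod hu hv), Set.indicator_of_mem hu,
      Set.indicator_of_mem hv, one_mul]
    ring
  · rw [Set.indicator_of_notMem (show (u, v) ∉ boxS d from fun hmem => hv hmem.2), Set.indicator_of_notMem hv, mul_zero]
  · rw [Set.indicator_of_notMem (show (u, v) ∉ boxS d from fun hmem => hu hmem.1), Set.indicator_of_notMem hu, zero_mul]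
  · rw [Set.indicator_of_notMem (show (u, v) ∉ boxS d from fun hmem => hu hmem.1), Set.indicator_of_notMem hu, zero_mul]

lemma measurable_Gf (d : ℕ) (α r : ℝ) : Measurable (Gf d α r) :=
  Measurable.indicator (measurable_const.add ((measurable_prodTerm d).const_mul _))
    (measurableSet_cubeS d)

lemma abs_Gf_le_two {d : ℕ} {α : ℝ} (hα : |α| ≤ 1) {r : ℝ} (hr : r ∈ Set.Icc (0:ℝ) 1)
    (u : Fin d → ℝ) : |Gf d α r u| ≤ 2 := by
  rw [Gf]
  by_cases hu : u ∈ cubeS d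
  · rw [Set.indicator_of_mem hu]
    have hPi := abs_prodTerm_le_one hu
    have h0 : 0 ≤ r * (1 - r) := mul_nonneg hr.1 (by linarith [hr.2])
    have h1 : r * (1 - r) ≤ 1 := by nlinarith [hr.1, hr.2]
    have h2 : |α * (r * (1 - r)) * ∏ i, (1 - 2 * u i)| ≤ 1 := by
      rw [abs_mul, abs_mul, abs_of_nonneg h0]
      have ha : |α| * (r * (1 - r)) ≤ 1 * 1 := mul_le_mul hα h1 h0 (by norm_num)
      have hb : |α| * (r * (1 - r)) * |∏ i, (1 - 2 * u i)| ≤ 1 * 1 * 1 :=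
        mul_le_mul ha hPi (abs_nonneg _) (by norm_num)
      linarith
    have h3 := abs_add_le r (α * (r * (1 - r)) * ∏ i, (1 - 2 * u i))
    rw [abs_of_nonneg hr.1] at h3
    calc |r + α * (r * (1 - r)) * ∏ i, (1 - 2 * u i)|
        ≤ r + |α * (r * (1 - r)) * ∏ i, (1 - 2 * u i)| := h3
      _ ≤ 2 := by linarith [hr.2]
  · rw [Set.indicator_of_notMem hu]
    norm_num

lemma Gf_mul_cube_indicator (d : ℕ) (α r : ℝ) (u : Fin d → ℝ) :
    Gf d α r u * (cubeS d).indicator (fun _ => (1:ℝ)) u = Gf d α r u := by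
  by_cases hu : u ∈ cubeS d
  · rw [Set.indicator_of_mem hu, mul_one]
  · rw [Gf, Set.indicator_of_notMem hu, zero_mul]

/-! ### One-dimensional integrals -/

lemma int_Icc (c r : ℝ) (hr : 0 ≤ r) :
    ∫ v in Set.Icc (0:ℝ) r, (1 + c * (1 - 2 * v)) = r + c * (r * (1 - r)) := by
  rw [MeasureTheory.integral_Icc_eq_integral_Ioc, ← intervalIntegral.integral_of_le hr]
  have h2 : IntervalIntegrable (fun v : ℝ => 2 * c * v) volume 0 r :=
    intervalIntegral.intervalIntegrable_id.const_mul _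
  have heq : (fun v : ℝ => 1 + c * (1 - 2 * v)) = fun v : ℝ => (1 + c) - 2 * c * v := by
    funext v; ring
  rw [heq, intervalIntegral.integral_sub intervalIntegrable_const h2,
    intervalIntegral.integral_const, intervalIntegral.integral_const_mul, integral_id]
  simp only [smul_eq_mul]
  ring

lemma ind_mul_ind (r : ℝ) (hr : r ∈ Set.Icc (0:ℝ) 1) (f : ℝ → ℝ) (v : ℝ) :
    (Set.Iic r).indicator (fun _ => (1:ℝ)) v * (Set.Icc (0:ℝ) 1).indicator f v
      = (Set.Icc (0:ℝ) r).indicator f v := by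
  by_cases h1 : v ∈ Set.Iic r <;> by_cases h2 : v ∈ Set.Icc (0:ℝ) 1
  · rw [Set.indicator_of_mem h1, Set.indicator_of_mem h2, one_mul,
      Set.indicator_of_mem (Set.mem_Icc.mpr ⟨h2.1, h1⟩)]
  · rw [Set.indicator_of_notMem h2, mul_zero, Set.indicator_of_notMem]
    intro hmem
    exact h2 ⟨hmem.1, le_trans hmem.2 hr.2⟩
  · rw [Set.indicator_of_notMem h1, zero_mul, Set.indicator_of_notMem]
    intro hmem
    exact h1 hmem.2
  · rw [Set.indicator_of_notMem h1, zero_mul, Set.indicator_of_notMem]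
    intro hmem
    exact h1 hmem.2

lemma oned (c r : ℝ) (hr : r ∈ Set.Icc (0:ℝ) 1) :
    ∫ v, (Set.Iic r).indicator (fun _ => (1:ℝ)) v
        * (Set.Icc (0:ℝ) 1).indicator (fun w => 1 + c * (1 - 2 * w)) v
      = r + c * (r * (1 - r)) := by
  simp_rw [ind_mul_ind r hr]
  rw [MeasureTheory.integral_indicator measurableSet_Icc]
  exact int_Icc c r hr.1

lemma oned_full (c : ℝ) :
    ∫ v, (Set.Icc (0:ℝ) 1).indicator (fun w => 1 + c * (1 - 2 * w)) v = 1 := by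
  rw [MeasureTheory.integral_indicator measurableSet_Icc]
  have := int_Icc c 1 zero_le_one
  simpa using this

lemma abs_ind_one_le {X : Type*} (A : Set X) (x : X) :
    |A.indicator (fun _ => (1:ℝ)) x| ≤ 1 := by
  by_cases h : x ∈ A
  · rw [Set.indicator_of_mem h]; norm_num
  · rw [Set.indicator_of_notMem h]; norm_num

/-! ### Moments -/

lemma moment0 : ∫ x : ℝ, (Set.Icc (0:ℝ) 1).indicator (fun _ => (1:ℝ)) x = 1 := by
  rw [MeasureTheory.integral_indicator measurableSet_Icc]
  simp [Real.volume_Icc]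

lemma moment1 : ∫ x : ℝ, (Set.Icc (0:ℝ) 1).indicator (fun x => 1 - 2 * x) x = 0 := by
  rw [MeasureTheory.integral_indicator measurableSet_Icc,
    MeasureTheory.integral_Icc_eq_integral_Ioc, ← intervalIntegral.integral_of_le zero_le_one,
    intervalIntegral.integral_sub intervalIntegrable_const
      (intervalIntegral.intervalIntegrable_id.const_mul _),
    intervalIntegral.integral_const, intervalIntegral.integral_const_mul, integral_id]
  norm_num

lemma moment2 : ∫ x : ℝ, (Set.Icc (0:ℝ) 1).indicator (fun x => (1 - 2 * x) ^ 2) x = 1 / 3 := by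
  rw [MeasureTheory.integral_indicator measurableSet_Icc,
    MeasureTheory.integral_Icc_eq_integral_Ioc, ← intervalIntegral.integral_of_le zero_le_one]
  have heq : (fun x : ℝ => (1 - 2 * x) ^ 2) = fun x : ℝ => 4 * x ^ 2 - 4 * x + 1 := by
    funext x; ring
  have h1 : IntervalIntegrable (fun x : ℝ => 4 * x ^ 2) volume 0 1 :=
    (Continuous.intervalIntegrable (by fun_prop) 0 1)
  have h2 : IntervalIntegrable (fun x : ℝ => 4 * x) volume 0 1 :=
    intervalIntegral.intervalIntegrable_id.const_mul _
  rw [heq, intervalIntegral.integral_add (h1.sub h2) intervalIntegrable_const,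
    intervalIntegral.integral_sub h1 h2, intervalIntegral.integral_const_mul,
    intervalIntegral.integral_const_mul, integral_pow, integral_id,
    intervalIntegral.integral_const]
  norm_num

/-! ### Indicator over the cube as a product -/

lemma indicator_pi {d : ℕ} (f : ℝ → ℝ) (u : Fin d → ℝ) :
    (cubeS d).indicator (fun u => ∏ i, f (u i)) u
      = ∏ i, (Set.Icc (0:ℝ) 1).indicator f (u i) := by
  by_cases h : u ∈ cubeS d
  · rw [Set.indicator_of_mem h]
    exact Finset.prod_congr rfl fun i _ =>
      (Set.indicator_of_mem (mem_cubeS.1 h i) f).symm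
  · rw [Set.indicator_of_notMem h]
    have h' : ¬ ∀ i, u i ∈ Set.Icc (0:ℝ) 1 := fun hh => h (mem_cubeS.2 hh)
    push_neg at h'
    obtain ⟨i, hi⟩ := h'
    exact (Finset.prod_eq_zero (Finset.mem_univ i) (Set.indicator_of_notMem hi f)).symm

/-! ### Integrability -/

lemma integrable_factor (k : ℕ) :
    Integrable ((Set.Icc (0:ℝ) 1).indicator (fun x : ℝ => (1 - 2 * x) ^ k)) := by
  refine IntegrableOn.integrable_indicator ?_ measurableSet_Icc
  refine ContinuousOn.integrableOn_compact isCompact_Icc ?_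
  exact Continuous.continuousOn (by fun_prop)

lemma volume_boxS (d : ℕ) : volume (boxS d) < ⊤ := by
  rw [boxS, MeasureTheory.Measure.volume_eq_prod, Measure.prod_prod]
  have h1 : volume (cubeS d) = 1 := by
    rw [cubeS, volume_pi_pi]
    simp [Real.volume_Icc]
  rw [h1, Real.volume_Icc]
  norm_num

lemma integrable_box {d : ℕ} (f : (Fin d → ℝ) × ℝ → ℝ) (hf : Measurable f) (C : ℝ)
    (hb : ∀ p, |f p| ≤ C) (h0 : ∀ p, p ∉ boxS d → f p = 0) :
    Integrable f (volume : Measure ((Fin d → ℝ) × ℝ)) := by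
  have hg : Integrable ((boxS d).indicator fun _ => C) volume :=
    IntegrableOn.integrable_indicator (integrableOn_const (volume_boxS d).ne)
      (measurableSet_boxS d)
  refine hg.mono' hf.aestronglyMeasurable (Filter.Eventually.of_forall fun p => ?_)
  by_cases hp : p ∈ boxS d
  · rw [Set.indicator_of_mem hp, Real.norm_eq_abs]
    exact hb p
  · rw [Set.indicator_of_notMem hp, h0 p hp, norm_zero]

lemma integrable_mul_rho {d : ℕ} {α : ℝ} (hα : |α| ≤ 1) (f : (Fin d → ℝ) × ℝ → ℝ)
    (hf : Measurable f) (C : ℝ) (hb : ∀ p, |f p| ≤ C) :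
    Integrable (fun p => f p * rho d α p) (volume : Measure ((Fin d → ℝ) × ℝ)) := by
  refine integrable_box _ (hf.mul (measurable_rho d α)) (C * 2) (fun p => ?_) (fun p hp => ?_)
  · rw [abs_mul]
    refine mul_le_mul (hb p) ?_ (abs_nonneg _) (le_trans (abs_nonneg _) (hb p))
    rw [abs_of_nonneg (rho_nonneg hα p)]
    exact rho_le_two hα p
  · rw [rho, Set.indicator_of_notMem hp, mul_zero]

/-! ### Fubini for `rho` -/

lemma fubini_rho {d : ℕ} {α : ℝ} (hα : |α| ≤ 1) (f : (Fin d → ℝ) × ℝ → ℝ)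
    (hf : Measurable f) (C : ℝ) (hb : ∀ p, |f p| ≤ C) :
    ∫ p, f p * rho d α p = ∫ u, ∫ v, f (u, v) * rho d α (u, v) := by
  have hint := integrable_mul_rho hα f hf C hb
  rw [MeasureTheory.Measure.volume_eq_prod] at hint
  rw [show (volume : Measure ((Fin d → ℝ) × ℝ))
      = (volume : Measure (Fin d → ℝ)).prod (volume : Measure ℝ) from
    MeasureTheory.Measure.volume_eq_prod _ _]
  exact MeasureTheory.integral_prod _ hint

/-! ### Inner integrals -/

lemma integral_rho_snd {d : ℕ} (α : ℝ) (u : Fin d → ℝ) :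
    ∫ v, rho d α (u, v) = (cubeS d).indicator (fun _ => (1:ℝ)) u := by
  simp_rw [rho_split α u]
  rw [MeasureTheory.integral_const_mul, oned_full, mul_one]

lemma integral_ind_rho {d : ℕ} (α : ℝ) (u : Fin d → ℝ) {r : ℝ} (hr : r ∈ Set.Icc (0:ℝ) 1) :
    ∫ v, (Set.Iic r).indicator (fun _ => (1:ℝ)) v * rho d α (u, v) = Gf d α r u := by
  by_cases hu : u ∈ cubeS d
  · have hρ : ∀ v, rho d α (u, v)
        = (Set.Icc (0:ℝ) 1).indicator
            (fun w => 1 + (α * ∏ i, (1 - 2 * u i)) * (1 - 2 * w)) v := by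
      intro v
      rw [rho_split α u, Set.indicator_of_mem hu, one_mul]
    simp_rw [hρ]
    rw [oned _ r hr, Gf, Set.indicator_of_mem hu]
    ring
  · have hρ : ∀ v, rho d α (u, v) = 0 := by
      intro v
      rw [rho_split α u, Set.indicator_of_notMem hu, zero_mul]
    simp_rw [hρ, mul_zero, integral_zero, Gf, Set.indicator_of_notMem hu]

/-! ### The final integral over the cube -/

lemma integral_Gf_mul {d : ℕ} (hd : 1 ≤ d) {α : ℝ} (hα : |α| ≤ 1) {s t : ℝ}
    (hs : s ∈ Set.Icc (0:ℝ) 1) (ht : t ∈ Set.Icc (0:ℝ) 1) :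
    ∫ u, Gf d α s u * Gf d α t u
      = s * t + α ^ 2 / 3 ^ d * (s * (1 - s)) * (t * (1 - t)) := by
  set a := α * (s * (1 - s)) with ha
  set b := α * (t * (1 - t)) with hb
  have hexp : ∀ u : Fin d → ℝ, Gf d α s u * Gf d α t u =
      (s * t) * ∏ i, (Set.Icc (0:ℝ) 1).indicator (fun x => (1 - 2 * x) ^ 0) (u i)
      + (s * b + t * a) * ∏ i, (Set.Icc (0:ℝ) 1).indicator (fun x => (1 - 2 * x) ^ 1) (u i)
      + (a * b) * ∏ i, (Set.Icc (0:ℝ) 1).indicator (fun x => (1 - 2 * x) ^ 2) (u i) := by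
    intro u
    rw [Gf, Gf]
    by_cases hu : u ∈ cubeS d
    · rw [Set.indicator_of_mem hu, Set.indicator_of_mem hu]
      have h0 : ∀ k : ℕ, ∏ i, (Set.Icc (0:ℝ) 1).indicator (fun x => (1 - 2 * x) ^ k) (u i)
          = (∏ i, (1 - 2 * u i)) ^ k := by
        intro k
        rw [← Finset.prod_pow]
        exact Finset.prod_congr rfl fun i _ =>
          Set.indicator_of_mem (mem_cubeS.1 hu i) _
      rw [h0 0, h0 1, h0 2]
      ring
    · rw [Set.indicator_of_notMem hu, Set.indicator_of_notMem hu]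
      have h' : ¬ ∀ i, u i ∈ Set.Icc (0:ℝ) 1 := fun hh => hu (mem_cubeS.2 hh)
      push_neg at h'
      obtain ⟨i, hi⟩ := h'
      have h0 : ∀ k : ℕ, ∏ i, (Set.Icc (0:ℝ) 1).indicator (fun x => ((1:ℝ) - 2 * x) ^ k) (u i)
          = 0 := fun k => Finset.prod_eq_zero (Finset.mem_univ i) (Set.indicator_of_notMem hi _)
      rw [h0 0, h0 1, h0 2]
      ring
  simp_rw [hexp]
  have hint : ∀ k : ℕ, Integrable
      (fun u : Fin d → ℝ => ∏ i, (Set.Icc (0:ℝ) 1).indicator (fun x => (1 - 2 * x) ^ k) (u i))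
      (volume : Measure (Fin d → ℝ)) :=
    fun k => Integrable.fintype_prod (f := fun _ : Fin d =>
      (Set.Icc (0:ℝ) 1).indicator (fun x : ℝ => (1 - 2 * x) ^ k)) fun _ => integrable_factor k
  have hq : ∀ k : ℕ,
      ∫ u : Fin d → ℝ, ∏ i, (Set.Icc (0:ℝ) 1).indicator (fun x => (1 - 2 * x) ^ k) (u i)
        = (∫ x : ℝ, (Set.Icc (0:ℝ) 1).indicator (fun x => (1 - 2 * x) ^ k) x) ^ d := by
    intro k
    rw [MeasureTheory.integral_fintype_prod_volume_eq_pow (ι := Fin d)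
      ((Set.Icc (0:ℝ) 1).indicator fun x : ℝ => (1 - 2 * x) ^ k)]
    rw [Fintype.card_fin]
  have i0 : Integrable (fun u : Fin d → ℝ =>
      (s * t) * ∏ i, (Set.Icc (0:ℝ) 1).indicator (fun x => (1 - 2 * x) ^ 0) (u i)) volume :=
    (hint 0).const_mul _
  have i1 : Integrable (fun u : Fin d → ℝ =>
      (s * b + t * a) * ∏ i, (Set.Icc (0:ℝ) 1).indicator (fun x => (1 - 2 * x) ^ 1) (u i))
      volume := (hint 1).const_mul _
  have i2 : Integrable (fun u : Fin d → ℝ =>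
      (a * b) * ∏ i, (Set.Icc (0:ℝ) 1).indicator (fun x => (1 - 2 * x) ^ 2) (u i)) volume :=
    (hint 2).const_mul _
  have i01 : Integrable (fun u : Fin d → ℝ =>
      (s * t) * ∏ i, (Set.Icc (0:ℝ) 1).indicator (fun x => (1 - 2 * x) ^ 0) (u i)
      + (s * b + t * a) * ∏ i, (Set.Icc (0:ℝ) 1).indicator (fun x => (1 - 2 * x) ^ 1) (u i))
      volume := i0.add i1
  rw [MeasureTheory.integral_add i01 i2, MeasureTheory.integral_add i0 i1,
    MeasureTheory.integral_const_mul, MeasureTheory.integral_const_mul,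
    MeasureTheory.integral_const_mul, hq 0, hq 1, hq 2]
  have e0 : ∫ x : ℝ, (Set.Icc (0:ℝ) 1).indicator (fun x => (1 - 2 * x) ^ 0) x = 1 := by
    simpa using moment0
  have e1 : ∫ x : ℝ, (Set.Icc (0:ℝ) 1).indicator (fun x => (1 - 2 * x) ^ 1) x = 0 := by
    simpa using moment1
  rw [e0, e1, moment2]
  have h3 : ((1:ℝ) / 3) ^ d = 1 / 3 ^ d := by
    rw [div_pow, one_pow]
  rw [h3, one_pow]
  have hd0 : (0:ℝ) ^ d = 0 := zero_pow (by omega)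
  rw [hd0, ha, hb]
  field_simp
  ring

end EfgmAux

end EfgmAux


open EfgmAux

/-- The `ψ`-transform maps the `(d+1)`-dimensional EFGM copula with
parameter `α` to the bivariate EFGM copula with parameter `α²/3^d`: if `(U,V)` has the
EFGM density `1 + α(1−2v)∏(1−2uᵢ)` on `[0,1]^{d+1}` and `V'` shares the same conditional
distribution as `V` given `U` and is conditionally independent of `V` given `U`, then
`P(V ≤ s, V' ≤ t) = st + (α²/3^d)·s(1−s)·t(1−t)`. -/
theorem psi_efgm
    {Ω : Type*} [MeasurableSpace Ω] (P : Measure Ω) [IsProbabilityMeasure P]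
    {d : ℕ} (hd : 1 ≤ d) (U : Ω → (Fin d → ℝ)) (V V' : Ω → ℝ)
    (hU : Measurable U) (hV : Measurable V) (hV' : Measurable V')
    (α : ℝ) (hα : α ∈ Icc (-1:ℝ) 1)
    (hlaw : Measure.map (fun ω => (U ω, V ω)) P =
      volume.withDensity (fun p : (Fin d → ℝ) × ℝ =>
        ENNReal.ofReal
          (Set.indicator ((Set.univ.pi fun _ : Fin d => Icc (0:ℝ) 1) ×ˢ Icc (0:ℝ) 1)
            (fun q => 1 + α * (1 - 2 * q.2) * ∏ i, (1 - 2 * q.1 i)) p)))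
    (hci : ∀ g h : ℝ → ℝ, Measurable g → (∃ C, ∀ x, |g x| ≤ C) →
        Measurable h → (∃ C, ∀ x, |h x| ≤ C) →
      P[fun ω => g (V ω) * h (V' ω) | MeasurableSpace.comap U inferInstance]
        =ᵐ[P] fun ω =>
          (P[fun ω' => g (V ω') | MeasurableSpace.comap U inferInstance]) ω *
          (P[fun ω' => h (V ω') | MeasurableSpace.comap U inferInstance]) ω) :
    ∀ s ∈ Icc (0:ℝ) 1, ∀ t ∈ Icc (0:ℝ) 1,
      (P {ω | V ω ≤ s ∧ V' ω ≤ t}).toReal =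
        s * t + α ^ 2 / 3 ^ d * (s * (1 - s)) * (t * (1 - t)) := by
  have habsα : |α| ≤ 1 := abs_le.2 ⟨hα.1, hα.2⟩
  intro s hs t ht
  have hmUle : MeasurableSpace.comap U inferInstance ≤ ‹MeasurableSpace Ω› := hU.comap_le
  haveI : SigmaFinite (P.trim hmUle) := inferInstance
  have hlaw' : Measure.map (fun ω => (U ω, V ω)) P
      = volume.withDensity (fun p => ENNReal.ofReal (rho d α p)) := hlaw
  -- transfer of integrals to the density
  have key : ∀ f : (Fin d → ℝ) × ℝ → ℝ, Measurable f →
      ∫ ω, f (U ω, V ω) ∂P = ∫ p, f p * rho d α p := by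
    intro f hf
    rw [← MeasureTheory.integral_map (hU.prodMk hV).aemeasurable hf.aestronglyMeasurable, hlaw']
    rw [show (fun p => ENNReal.ofReal (rho d α p))
        = (fun p => ((Real.toNNReal (rho d α p) : ℝ≥0) : ℝ≥0∞)) from rfl]
    have hmnn : Measurable fun p : (Fin d → ℝ) × ℝ => (rho d α p).toNNReal :=
      measurable_real_toNNReal.comp (measurable_rho d α)
    rw [integral_withDensity_eq_integral_smul hmnn f]
    congr 1
    funext p
    rw [NNReal.smul_def, Real.coe_toNNReal _ (rho_nonneg habsα p), smul_eq_mul, mul_comm]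
  have hPbdd : ∀ f : Ω → ℝ, Measurable f → ∀ C : ℝ, (∀ ω, |f ω| ≤ C) → Integrable f P :=
    fun f hf C hC => (integrable_const C).mono' hf.aestronglyMeasurable
      (Filter.Eventually.of_forall fun ω => by rw [Real.norm_eq_abs]; exact hC ω)
  have hIicm : ∀ r : ℝ, Measurable ((Set.Iic r).indicator (fun _ => (1:ℝ))) :=
    fun r => measurable_const.indicator measurableSet_Iic
  -- identification of the conditional expectation
  have claim : ∀ r : ℝ, r ∈ Icc (0:ℝ) 1 →
      (fun ω => Gf d α r (U ω)) =ᵐ[P]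
        P[fun ω => (Set.Iic r).indicator (fun _ => (1:ℝ)) (V ω) |
          MeasurableSpace.comap U inferInstance] := by
    intro r hr
    refine ae_eq_condExp_of_forall_setIntegral_eq hmUle
      (hPbdd _ ((hIicm r).comp hV) 1 fun ω => abs_ind_one_le _ (V ω))
      (fun A hA _ => (hPbdd _ ((measurable_Gf d α r).comp hU) 2
        fun ω => abs_Gf_le_two habsα hr (U ω)).integrableOn)
      (fun A hA _ => ?_)
      (StronglyMeasurable.aestronglyMeasurable
        (Measurable.stronglyMeasurable ((measurable_Gf d α r).comp (comap_measurable U))))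
    obtain ⟨B', hB'm, rfl⟩ := hA
    have e1 : ∫ ω in U ⁻¹' B', Gf d α r (U ω) ∂P
        = ∫ ω, (fun p : (Fin d → ℝ) × ℝ =>
            B'.indicator (fun _ => (1:ℝ)) p.1 * Gf d α r p.1) (U ω, V ω) ∂P := by
      rw [← MeasureTheory.integral_indicator (hU hB'm)]
      congr 1
      funext ω
      by_cases h : U ω ∈ B'
      · rw [Set.indicator_of_mem (Set.mem_preimage.2 h)]
        simp only [Set.indicator_of_mem h, one_mul]
      · rw [Set.indicator_of_notMem (fun hh => h (Set.mem_preimage.1 hh))]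
        simp only [Set.indicator_of_notMem h, zero_mul]
    have e2 : ∫ ω in U ⁻¹' B', (Set.Iic r).indicator (fun _ => (1:ℝ)) (V ω) ∂P
        = ∫ ω, (fun p : (Fin d → ℝ) × ℝ =>
            B'.indicator (fun _ => (1:ℝ)) p.1
              * (Set.Iic r).indicator (fun _ => (1:ℝ)) p.2) (U ω, V ω) ∂P := by
      rw [← MeasureTheory.integral_indicator (hU hB'm)]
      congr 1
      funext ω
      by_cases h : U ω ∈ B'
      · rw [Set.indicator_of_mem (Set.mem_preimage.2 h)]
        simp only [Set.indicator_of_mem h, one_mul]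
      · rw [Set.indicator_of_notMem (fun hh => h (Set.mem_preimage.1 hh))]
        simp only [Set.indicator_of_notMem h, zero_mul]
    have hm1 : Measurable (fun p : (Fin d → ℝ) × ℝ =>
        B'.indicator (fun _ => (1:ℝ)) p.1 * Gf d α r p.1) :=
      ((measurable_const.indicator hB'm).comp measurable_fst).mul
        ((measurable_Gf d α r).comp measurable_fst)
    have hm2 : Measurable (fun p : (Fin d → ℝ) × ℝ =>
        B'.indicator (fun _ => (1:ℝ)) p.1 * (Set.Iic r).indicator (fun _ => (1:ℝ)) p.2) :=
      ((measurable_const.indicator hB'm).comp measurable_fst).mul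
        ((hIicm r).comp measurable_snd)
    rw [e1, e2, key _ hm1, key _ hm2,
      fubini_rho habsα _ hm1 2 ?_, fubini_rho habsα _ hm2 1 ?_]
    · refine MeasureTheory.integral_congr_ae (Filter.Eventually.of_forall fun u => ?_)
      have hL : (∫ v, B'.indicator (fun _ => (1:ℝ)) u * Gf d α r u * rho d α (u, v))
          = B'.indicator (fun _ => (1:ℝ)) u * Gf d α r u := by
        rw [MeasureTheory.integral_const_mul, integral_rho_snd, mul_assoc, Gf_mul_cube_indicator]
      have hR : (∫ v, B'.indicator (fun _ => (1:ℝ)) u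
            * (Set.Iic r).indicator (fun _ => (1:ℝ)) v * rho d α (u, v))
          = B'.indicator (fun _ => (1:ℝ)) u * Gf d α r u := by
        simp_rw [mul_assoc]
        rw [MeasureTheory.integral_const_mul, integral_ind_rho α u hr]
      exact hL.trans hR.symm
    · intro p
      show |B'.indicator (fun _ => (1:ℝ)) p.1 * (Set.Iic r).indicator (fun _ => (1:ℝ)) p.2| ≤ 1
      rw [abs_mul]
      calc |B'.indicator (fun _ => (1:ℝ)) p.1| * |(Set.Iic r).indicator (fun _ => (1:ℝ)) p.2|
          ≤ 1 * 1 := mul_le_mul (abs_ind_one_le _ _) (abs_ind_one_le _ _) (abs_nonneg _)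
            (by norm_num)
        _ = 1 := by norm_num
    · intro p
      show |B'.indicator (fun _ => (1:ℝ)) p.1 * Gf d α r p.1| ≤ 2
      rw [abs_mul]
      calc |B'.indicator (fun _ => (1:ℝ)) p.1| * |Gf d α r p.1|
          ≤ 1 * 2 := mul_le_mul (abs_ind_one_le _ _) (abs_Gf_le_two habsα hr _) (abs_nonneg _)
            (by norm_num)
        _ = 2 := by norm_num
  -- final assembly
  have hfinal1 : (P {ω | V ω ≤ s ∧ V' ω ≤ t}).toReal
      = ∫ ω, (Set.Iic s).indicator (fun _ => (1:ℝ)) (V ω)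
          * (Set.Iic t).indicator (fun _ => (1:ℝ)) (V' ω) ∂P := by
    have hms : MeasurableSet {ω | V ω ≤ s ∧ V' ω ≤ t} :=
      (hV measurableSet_Iic).inter (hV' measurableSet_Iic)
    rw [← measureReal_def, ← MeasureTheory.integral_indicator_one hms]
    congr 1
    funext ω
    by_cases h1 : V ω ≤ s <;> by_cases h2 : V' ω ≤ t <;>
      simp [Set.indicator_apply, Set.mem_setOf_eq, Set.mem_Iic, h1, h2]
  have hfinal2 :
      ∫ ω, (Set.Iic s).indicator (fun _ => (1:ℝ)) (V ω)
          * (Set.Iic t).indicator (fun _ => (1:ℝ)) (V' ω) ∂P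
        = ∫ ω, Gf d α s (U ω) * Gf d α t (U ω) ∂P := by
    rw [← MeasureTheory.integral_condExp hmUle]
    exact MeasureTheory.integral_congr_ae
      ((hci ((Set.Iic s).indicator (fun _ => (1:ℝ))) ((Set.Iic t).indicator (fun _ => (1:ℝ)))
          (hIicm s) ⟨1, fun x => abs_ind_one_le _ x⟩ (hIicm t) ⟨1, fun x => abs_ind_one_le _ x⟩).trans
        (((claim s hs).mul (claim t ht)).symm))
  have hfinal3 : ∫ ω, Gf d α s (U ω) * Gf d α t (U ω) ∂P
      = ∫ p : (Fin d → ℝ) × ℝ, Gf d α s p.1 * Gf d α t p.1 * rho d α p := by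
    have hm3 : Measurable (fun p : (Fin d → ℝ) × ℝ => Gf d α s p.1 * Gf d α t p.1) :=
      ((measurable_Gf d α s).comp measurable_fst).mul
        ((measurable_Gf d α t).comp measurable_fst)
    exact key _ hm3
  have hfinal4 : ∫ p : (Fin d → ℝ) × ℝ, Gf d α s p.1 * Gf d α t p.1 * rho d α p
      = ∫ u, Gf d α s u * Gf d α t u := by
    have hm3 : Measurable (fun p : (Fin d → ℝ) × ℝ => Gf d α s p.1 * Gf d α t p.1) :=
      ((measurable_Gf d α s).comp measurable_fst).mul
        ((measurable_Gf d α t).comp measurable_fst)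
    rw [fubini_rho habsα _ hm3 4 ?_]
    · refine MeasureTheory.integral_congr_ae (Filter.Eventually.of_forall fun u => ?_)
      have hL : (∫ v, Gf d α s u * Gf d α t u * rho d α (u, v))
          = Gf d α s u * Gf d α t u := by
        rw [MeasureTheory.integral_const_mul, integral_rho_snd, mul_assoc, Gf_mul_cube_indicator]
      exact hL
    · intro p
      show |Gf d α s p.1 * Gf d α t p.1| ≤ 4
      rw [abs_mul]
      calc |Gf d α s p.1| * |Gf d α t p.1|
          ≤ 2 * 2 := mul_le_mul (abs_Gf_le_two habsα hs _) (abs_Gf_le_two habsα ht _)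
            (abs_nonneg _) (by norm_num)
        _ = 4 := by norm_num
  rw [hfinal1, hfinal2, hfinal3, hfinal4]
  exact integral_Gf_mul hd habsα hs ht
end

section
/- For every dimension d ≥ 1 there exists a constant c(d), depending only on d, with the following property: for every n ∈ ℕ, every collection of pairwise distinct points x₁, ..., x_n ∈ ℝ^d, every map N : {1,...,n} → {1,...,n} such that for every j, N(j) ≠ j and ‖x_{N(j)} − x_j‖ = min_{k ≠ j} ‖x_k − x_j‖ (i.e., x_{N(j)} is a nearest neighbour of x_j with respect to the Euclidean norm), and every index i ∈ {1,...,n}, the number of j with N(j) = i is at most c(d). -/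
open Set

lemma sep_lemma {d : ℕ} (u v : EuclideanSpace ℝ (Fin d)) (hu : u ≠ 0) (hv : v ≠ 0)
    (h1 : ‖u‖ ≤ ‖u - v‖) (h2 : ‖v‖ ≤ ‖u - v‖) :
    1 ≤ ‖‖u‖⁻¹ • u - ‖v‖⁻¹ • v‖ := by
  have ha : (0:ℝ) < ‖u‖ := norm_pos_iff.2 hu
  have hb : (0:ℝ) < ‖v‖ := norm_pos_iff.2 hv
  have hsq : ‖u - v‖^2 = ‖u‖^2 - 2 * inner ℝ u v + ‖v‖^2 := @norm_sub_sq_real _ _ _ u v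
  have h1' : ‖u‖^2 ≤ ‖u - v‖^2 := by nlinarith [norm_nonneg (u - v)]
  have h2' : ‖v‖^2 ≤ ‖u - v‖^2 := by nlinarith [norm_nonneg (u - v)]
  have hiu : 2 * (inner ℝ u v : ℝ) ≤ ‖v‖^2 := by nlinarith
  have hiv : 2 * (inner ℝ u v : ℝ) ≤ ‖u‖^2 := by nlinarith
  have hkey : 2 * (inner ℝ u v : ℝ) ≤ ‖u‖ * ‖v‖ := by
    rcases le_or_gt (inner ℝ u v : ℝ) 0 with h | h
    · nlinarith
    · nlinarith [mul_le_mul hiu hiv (by nlinarith) (sq_nonneg ‖v‖)]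
  have hnorm : ‖‖u‖⁻¹ • u - ‖v‖⁻¹ • v‖^2 =
      2 - 2 * (‖u‖⁻¹ * ‖v‖⁻¹ * (inner ℝ u v : ℝ)) := by
    have := @norm_sub_sq_real _ _ _ (‖u‖⁻¹ • u) (‖v‖⁻¹ • v)
    rw [this, norm_smul, norm_smul, real_inner_smul_left, real_inner_smul_right]
    simp [abs_of_pos (inv_pos.2 ha), abs_of_pos (inv_pos.2 hb)]
    field_simp
    ring
  have hfin : 1 ≤ ‖‖u‖⁻¹ • u - ‖v‖⁻¹ • v‖^2 := by
    rw [hnorm]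
    have h := mul_le_mul_of_nonneg_left hkey
      (le_of_lt (mul_pos (inv_pos.2 ha) (inv_pos.2 hb)))
    have h2 : ‖u‖⁻¹ * ‖v‖⁻¹ * (inner ℝ u v : ℝ) * 2 ≤ 1 := by
      calc ‖u‖⁻¹ * ‖v‖⁻¹ * (inner ℝ u v : ℝ) * 2 = ‖u‖⁻¹ * ‖v‖⁻¹ * (2 * (inner ℝ u v : ℝ)) := by ring
        _ ≤ ‖u‖⁻¹ * ‖v‖⁻¹ * (‖u‖ * ‖v‖) := h
        _ = 1 := by field_simp
    linarith
  nlinarith [norm_nonneg (‖u‖⁻¹ • u - ‖v‖⁻¹ • v)]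

/-- In every dimension `d` there is a constant `c(d)` bounding the
in-degree of the nearest-neighbour graph: for pairwise distinct points `x₁,…,x_n` in
Euclidean `ℝ^d` and any nearest-neighbour map `N`, each index `i` is the nearest
neighbour of at most `c(d)` points. -/
theorem nearest_neighbour_indegree_bound (d : ℕ) (hd : 1 ≤ d) :
    ∃ c : ℕ, ∀ (n : ℕ) (x : Fin n → EuclideanSpace ℝ (Fin d)),
      Function.Injective x →
      ∀ N : Fin n → Fin n,
        (∀ j : Fin n, N j ≠ j ∧ ∀ k : Fin n, k ≠ j → dist (x (N j)) (x j) ≤ dist (x k) (x j)) →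
        ∀ i : Fin n, (Finset.univ.filter fun j => N j = i).card ≤ c := by
  classical
  obtain ⟨T, hT⟩ : ∃ T : Finset (EuclideanSpace ℝ (Fin d)),
      Metric.sphere (0 : EuclideanSpace ℝ (Fin d)) 1 ⊆ ⋃ t ∈ T, Metric.ball t (1/2) := by
    obtain ⟨T, hT⟩ := (isCompact_sphere (0 : EuclideanSpace ℝ (Fin d)) 1).elim_finite_subcover
      (fun t : EuclideanSpace ℝ (Fin d) => Metric.ball t (1/2))
      (fun t => Metric.isOpen_ball)
      (fun p hp => mem_iUnion.2 ⟨p, Metric.mem_ball_self (by norm_num)⟩)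
    exact ⟨T, by simpa using hT⟩
  refine ⟨T.card, fun n x hx N hN i => ?_⟩
  set F := Finset.univ.filter fun j => N j = i with hF
  have hFi : ∀ j ∈ F, N j = i := fun j hj => (Finset.mem_filter.1 hj).2
  have hji : ∀ j ∈ F, j ≠ i := by
    intro j hj h
    exact (hN j).1 (by rw [hFi j hj, h])
  have hne : ∀ j ∈ F, x j - x i ≠ 0 := by
    intro j hj h
    exact hji j hj (hx (by rwa [sub_eq_zero] at h))
  set u : Fin n → EuclideanSpace ℝ (Fin d) :=
    fun j => ‖x j - x i‖⁻¹ • (x j - x i) with hu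
  have husphere : ∀ j ∈ F, u j ∈ Metric.sphere (0 : EuclideanSpace ℝ (Fin d)) 1 := by
    intro j hj
    have h := hne j hj
    simp [hu, norm_smul, abs_of_pos (inv_pos.2 (norm_pos_iff.2 h)),
      inv_mul_cancel₀ (norm_ne_zero_iff.2 h)]
  -- choose for each j ∈ F a ball center
  have hchoice : ∀ j ∈ F, ∃ t ∈ T, u j ∈ Metric.ball t (1/2) := by
    intro j hj
    have := hT (husphere j hj)
    simpa using this
  choose! f hfT hfball using hchoice
  -- separation
  have hsep : ∀ j ∈ F, ∀ j' ∈ F, j ≠ j' → 1 ≤ dist (u j) (u j') := by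
    intro j hj j' hj' hjj'
    have hxne : x j ≠ x j' := fun h => hjj' (hx h)
    have h1 : dist (x i) (x j) ≤ dist (x j') (x j) := by
      have := (hN j).2 j' (fun h => hjj' h.symm)
      rwa [hFi j hj] at this
    have h2 : dist (x i) (x j') ≤ dist (x j) (x j') := by
      have := (hN j').2 j (fun h => hjj' h)
      rwa [hFi j' hj'] at this
    have key := sep_lemma (x j - x i) (x j' - x i) (hne j hj) (hne j' hj') ?_ ?_
    · simpa [hu, dist_eq_norm] using key
    · have : (x j - x i) - (x j' - x i) = x j - x j' := by abel
      rw [this]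
      calc ‖x j - x i‖ = dist (x i) (x j) := by rw [dist_eq_norm, norm_sub_rev]
        _ ≤ dist (x j') (x j) := h1
        _ = ‖x j - x j'‖ := by rw [dist_eq_norm, norm_sub_rev]
    · have : (x j - x i) - (x j' - x i) = x j - x j' := by abel
      rw [this]
      calc ‖x j' - x i‖ = dist (x i) (x j') := by rw [dist_eq_norm, norm_sub_rev]
        _ ≤ dist (x j) (x j') := h2
        _ = ‖x j - x j'‖ := by rw [dist_eq_norm]
  -- injectivity of f on F
  have hinj : Set.InjOn f (F : Set (Fin n)) := by
    intro j hj j' hj' hff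
    by_contra hjj'
    have h1 := hfball j hj
    have h2 := hfball j' hj'
    rw [hff] at h1
    have : dist (u j) (u j') < 1 := by
      calc dist (u j) (u j') ≤ dist (u j) (f j') + dist (f j') (u j') := dist_triangle _ _ _
        _ < 1/2 + 1/2 := by
            have := Metric.mem_ball.1 h1
            have := Metric.mem_ball.1 h2
            rw [dist_comm (f j') (u j')]
            linarith [Metric.mem_ball.1 h1, Metric.mem_ball.1 h2]
        _ = 1 := by norm_num
    exact absurd (hsep j hj j' hj' hjj') (not_le.2 this)
  have := Finset.card_le_card_of_injOn f (fun j hj => hfT j hj) hinj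
  exact this
end
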